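/- Let n ≥ 2, let a_1, …, a_{n−1}, q_1, …, q_{n−1}, x_1, …, x_{n−1}, x_n, b, w_n be positive real numbers with 1 − Σ_{l=1}^{n−1} x_l/q_l > 0, and let J be the (2n−1)×(2n−1) real matrix in block form J = [[O, A, 0], [R, −b w_n I, 0], [r, 0, −b w_n]] with O the zero matrix, A = −w_n diag(a_1, …, a_{n−1}), R the (n−1)×(n−1) matrix with diagonal entries q_j − x_j and off-diagonal entries −x_j in row j, I the identity of order n−1, and r the row vector with all entries −x_n. Then every complex eigenvalue of J has strictly negative real part. -/

import Mathlib

private lemma quad_root_re_neg {p c : ℝ} (hp : 0 < p) (hc : 0 < c) {z : ℂ}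
    (h : z ^ 2 + (p : ℂ) * z + (c : ℂ) = 0) : z.re < 0 := by
  have hre := congrArg Complex.re h
  have him := congrArg Complex.im h
  simp [pow_two, Complex.add_re, Complex.add_im, Complex.mul_re, Complex.mul_im] at hre him
  rcases eq_or_ne z.im 0 with h0 | h0
  · rw [h0] at hre
    nlinarith [sq_nonneg z.re]
  · have h2 : z.im * (2 * z.re + p) = 0 := by linarith
    have h3 := (mul_eq_zero.mp h2).resolve_left h0
    linarith

/-- Every complex eigenvalue of the Jacobian `J` (a root of `det(zI - J) = 0`)
has strictly negative real part. -/
theorem stmt_12 (n : ℕ) (hn : 2 ≤ n)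
    (a q x : Fin (n - 1) → ℝ) (xn b wn : ℝ)
    (ha : ∀ k, 0 < a k) (hq : ∀ k, 0 < q k) (hx : ∀ k, 0 < x k)
    (hxn : 0 < xn) (hb : 0 < b) (hwn : 0 < wn)
    (hpos : 0 < 1 - ∑ l, x l / q l)
    (J : Matrix (Fin (n - 1) ⊕ (Fin (n - 1) ⊕ Unit))
      (Fin (n - 1) ⊕ (Fin (n - 1) ⊕ Unit)) ℝ)
    (hJ : J = Matrix.of fun i j =>
      match i, j with
      | Sum.inl _, Sum.inl _ => 0
      | Sum.inl i, Sum.inr (Sum.inl j) => if i = j then -(wn * a i) else 0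
      | Sum.inl _, Sum.inr (Sum.inr _) => 0
      | Sum.inr (Sum.inl i), Sum.inl j => if i = j then q i - x i else -x i
      | Sum.inr (Sum.inl i), Sum.inr (Sum.inl j) => if i = j then -(b * wn) else 0
      | Sum.inr (Sum.inl _), Sum.inr (Sum.inr _) => 0
      | Sum.inr (Sum.inr _), Sum.inl _ => -xn
      | Sum.inr (Sum.inr _), Sum.inr (Sum.inl _) => 0
      | Sum.inr (Sum.inr _), Sum.inr (Sum.inr _) => -(b * wn)) :
    ∀ z : ℂ,
      (z • (1 : Matrix (Fin (n - 1) ⊕ (Fin (n - 1) ⊕ Unit))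
          (Fin (n - 1) ⊕ (Fin (n - 1) ⊕ Unit)) ℂ) - J.map Complex.ofReal).det = 0 →
      z.re < 0 := by
  intro z hz
  obtain ⟨w, hw0, hwv⟩ := Matrix.exists_mulVec_eq_zero_iff.mpr hz
  set u : Fin (n - 1) → ℂ := fun i => w (Sum.inl i) with hu
  set v : Fin (n - 1) → ℂ := fun i => w (Sum.inr (Sum.inl i)) with hv
  set s : ℂ := w (Sum.inr (Sum.inr ())) with hs
  set S : ℂ := ∑ j, u j with hS
  have hwa : ∀ i, ((wn * a i : ℝ) : ℂ) ≠ 0 := fun i =>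
    Complex.ofReal_ne_zero.mpr (mul_pos hwn (ha i)).ne'
  have E1 : ∀ i, z * u i + ((wn * a i : ℝ) : ℂ) * v i = 0 := by
    intro i
    have h := congrFun hwv (Sum.inl i)
    simp [Matrix.mulVec, dotProduct, Fintype.sum_sum_type, hJ,
      Matrix.sub_apply, Matrix.smul_apply, Matrix.one_apply, Matrix.map_apply,
      apply_ite Complex.ofReal, ite_mul, Finset.sum_ite_eq] at h
    push_cast at h ⊢
    linear_combination h
  have E2 : ∀ i, ((q i : ℝ) : ℂ) * u i - ((x i : ℝ) : ℂ) * S = (z + ((b * wn : ℝ) : ℂ)) * v i := by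
    intro i
    have h := congrFun hwv (Sum.inr (Sum.inl i))
    simp [Matrix.mulVec, dotProduct, Fintype.sum_sum_type, hJ,
      Matrix.sub_apply, Matrix.smul_apply, Matrix.one_apply, Matrix.map_apply,
      ite_mul, Finset.sum_ite_eq, Finset.sum_sub_distrib] at h
    have hrw : ∀ j : Fin (n - 1),
        ((if i = j then q i - x i else -x i : ℝ) : ℂ) * w (Sum.inl j)
          = (if i = j then ((q i : ℝ) : ℂ) * w (Sum.inl j) else 0)
            - ((x i : ℝ) : ℂ) * w (Sum.inl j) := by
      intro j
      split <;> push_cast <;> ring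
    rw [Finset.sum_congr rfl fun j _ => hrw j, Finset.sum_sub_distrib,
      Finset.sum_ite_eq] at h
    simp [apply_ite Complex.ofReal, ite_mul, sub_mul, Finset.sum_sub_distrib,
      Finset.sum_ite_eq, ← Finset.mul_sum] at h
    push_cast
    push_cast at h
    linear_combination -h
  have E3 : ((xn : ℝ) : ℂ) * S + (z + ((b * wn : ℝ) : ℂ)) * s = 0 := by
    have h := congrFun hwv (Sum.inr (Sum.inr ()))
    simp [Matrix.mulVec, dotProduct, Fintype.sum_sum_type, hJ,
      Matrix.sub_apply, Matrix.smul_apply, Matrix.one_apply, Matrix.map_apply,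
      ← Finset.mul_sum] at h
    push_cast at h ⊢
    linear_combination h
  by_cases hU : ∀ i, u i = 0
  · -- then v = 0 and s ≠ 0, so z = -(b*wn)
    have hV : ∀ i, v i = 0 := by
      intro i
      have := E1 i
      rw [hU i, mul_zero, zero_add] at this
      exact (mul_eq_zero.mp this).resolve_left (hwa i)
    have hSne : s ≠ 0 := by
      obtain ⟨idx, hidx⟩ := Function.ne_iff.mp hw0
      rcases idx with i | i | i
      · exact absurd (hU i) hidx
      · exact absurd (hV i) hidx
      · exact hidx
    have hS0 : S = 0 := by
      simp [hS, hU]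
    rw [hS0, mul_zero, zero_add] at E3
    have hzz : z = -((b * wn : ℝ) : ℂ) := by
      have h4 := (mul_eq_zero.mp E3).resolve_right hSne
      linear_combination h4
    rw [hzz]
    simpa using mul_pos hb hwn
  · push_neg at hU
    obtain ⟨i0, hi0⟩ := hU
    have Key : ∀ i, ((wn * a i : ℝ) : ℂ) * (((q i : ℝ) : ℂ) * u i - ((x i : ℝ) : ℂ) * S)
        + (z + ((b * wn : ℝ) : ℂ)) * z * u i = 0 := by
      intro i
      linear_combination ((wn * a i : ℝ) : ℂ) * (E2 i) + (z + ((b * wn : ℝ) : ℂ)) * (E1 i)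
    set A0 : ℝ := ∑ i, q i / x i * Complex.normSq (u i) with hA0def
    set B : ℝ := ∑ i, (x i * (wn * a i))⁻¹ * Complex.normSq (u i) with hBdef
    set T : ℝ := Complex.normSq S with hTdef
    have per : ∀ i : Fin (n - 1),
        (((x i * (wn * a i))⁻¹ : ℝ) : ℂ) * (starRingEnd ℂ) (u i)
            * (((wn * a i : ℝ) : ℂ) * (((q i : ℝ) : ℂ) * u i - ((x i : ℝ) : ℂ) * S)
              + (z + ((b * wn : ℝ) : ℂ)) * z * u i)
          = ((q i / x i * Complex.normSq (u i) : ℝ) : ℂ)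
            - (starRingEnd ℂ) (u i) * S
            + (z + ((b * wn : ℝ) : ℂ)) * z
              * (((x i * (wn * a i))⁻¹ * Complex.normSq (u i) : ℝ) : ℂ) := by
      intro i
      have h1 : ((Complex.normSq (u i) : ℝ) : ℂ) = u i * (starRingEnd ℂ) (u i) :=
        (Complex.mul_conj (u i)).symm
      have hx0 : ((x i : ℝ) : ℂ) ≠ 0 := Complex.ofReal_ne_zero.mpr (hx i).ne'
      have hwn0 : ((wn : ℝ) : ℂ) ≠ 0 := Complex.ofReal_ne_zero.mpr hwn.ne'
      have ha0 : ((a i : ℝ) : ℂ) ≠ 0 := Complex.ofReal_ne_zero.mpr (ha i).ne'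
      push_cast [h1]
      field_simp
    have Main : ((A0 : ℝ) : ℂ) - ((T : ℝ) : ℂ)
        + (z + ((b * wn : ℝ) : ℂ)) * z * ((B : ℝ) : ℂ) = 0 := by
      have h0 : ∑ i, (((x i * (wn * a i))⁻¹ : ℝ) : ℂ) * (starRingEnd ℂ) (u i)
          * (((wn * a i : ℝ) : ℂ) * (((q i : ℝ) : ℂ) * u i - ((x i : ℝ) : ℂ) * S)
            + (z + ((b * wn : ℝ) : ℂ)) * z * u i) = 0 :=
        Finset.sum_eq_zero fun i _ => by rw [Key i, mul_zero]
      rw [Finset.sum_congr rfl fun i _ => per i] at h0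
      have hconj : ∑ i, (starRingEnd ℂ) (u i) * S = ((T : ℝ) : ℂ) := by
        rw [← Finset.sum_mul, ← map_sum, hTdef, ← hS]
        rw [← Complex.mul_conj S]
        ring
      rw [Finset.sum_add_distrib, Finset.sum_sub_distrib, hconj,
        ← Finset.mul_sum, ← Complex.ofReal_sum, ← Complex.ofReal_sum, ← hA0def, ← hBdef] at h0
      linear_combination h0
    -- positivity facts
    have hBpos : 0 < B :=
      Finset.sum_pos' (fun i _ => mul_nonneg
          (inv_nonneg.2 (mul_nonneg (hx i).le (mul_nonneg hwn.le (ha i).le)))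
          (Complex.normSq_nonneg _))
        ⟨i0, Finset.mem_univ _, mul_pos
          (inv_pos.2 (mul_pos (hx i0) (mul_pos hwn (ha i0))))
          (Complex.normSq_pos.mpr hi0)⟩
    have hA0pos : 0 < A0 :=
      Finset.sum_pos' (fun i _ => mul_nonneg
          (div_nonneg (hq i).le (hx i).le) (Complex.normSq_nonneg _))
        ⟨i0, Finset.mem_univ _, mul_pos (div_pos (hq i0) (hx i0))
          (Complex.normSq_pos.mpr hi0)⟩
    have hTA : T < A0 := by
      have h1 : Real.sqrt T ≤ ∑ i, ‖u i‖ := by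
        rw [hTdef, ← Complex.sq_norm, Real.sqrt_sq (norm_nonneg _)]
        have h1' := norm_sum_le (Finset.univ) u
        rw [← hS] at h1'
        simpa using h1'
      have h2 : (∑ i, ‖u i‖) ^ 2 ≤ (∑ l, x l / q l) * A0 := by
        have hcs := Finset.sum_mul_sq_le_sq_mul_sq Finset.univ
          (fun i => Real.sqrt (x i / q i))
          (fun i => Real.sqrt (q i / x i) * ‖u i‖)
        have he : ∀ i : Fin (n - 1), Real.sqrt (x i / q i)
            * (Real.sqrt (q i / x i) * ‖u i‖) = ‖u i‖ := by
          intro i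
          rw [← mul_assoc, ← Real.sqrt_mul (div_nonneg (hx i).le (hq i).le)]
          have : x i / q i * (q i / x i) = 1 := by
            rw [div_mul_div_comm, mul_comm (x i) (q i),
              div_self (mul_pos (hq i) (hx i)).ne']
          rw [this, Real.sqrt_one, one_mul]
        have hf : ∀ i : Fin (n - 1), Real.sqrt (x i / q i) ^ 2 = x i / q i := fun i =>
          Real.sq_sqrt (div_nonneg (hx i).le (hq i).le)
        have hg : ∀ i : Fin (n - 1), (Real.sqrt (q i / x i) * ‖u i‖) ^ 2
            = q i / x i * Complex.normSq (u i) := by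
          intro i
          rw [mul_pow, Real.sq_sqrt (div_nonneg (hq i).le (hx i).le), Complex.sq_norm]
        calc (∑ i, ‖u i‖) ^ 2
            = (∑ i, Real.sqrt (x i / q i) * (Real.sqrt (q i / x i) * ‖u i‖)) ^ 2 := by
              rw [Finset.sum_congr rfl fun i _ => he i]
          _ ≤ (∑ i, Real.sqrt (x i / q i) ^ 2)
              * ∑ i, (Real.sqrt (q i / x i) * ‖u i‖) ^ 2 := hcs
          _ = (∑ l, x l / q l) * A0 := by
              rw [Finset.sum_congr rfl fun i _ => hf i, Finset.sum_congr rfl fun i _ => hg i,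
                hA0def]
      have h3 : T ≤ (∑ l, x l / q l) * A0 := by
        have hT0 : 0 ≤ T := Complex.normSq_nonneg _
        calc T = Real.sqrt T ^ 2 := (Real.sq_sqrt hT0).symm
          _ ≤ (∑ i, ‖u i‖) ^ 2 := by
              apply pow_le_pow_left₀ (Real.sqrt_nonneg _) h1
          _ ≤ (∑ l, x l / q l) * A0 := h2
      nlinarith
    have hc : 0 < (A0 - T) / B := div_pos (by linarith) hBpos
    have hquad : z ^ 2 + ((b * wn : ℝ) : ℂ) * z + (((A0 - T) / B : ℝ) : ℂ) = 0 := by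
      have hB0 : ((B : ℝ) : ℂ) ≠ 0 := Complex.ofReal_ne_zero.mpr hBpos.ne'
      have : (((A0 - T) / B : ℝ) : ℂ) = (((A0 : ℝ) : ℂ) - ((T : ℝ) : ℂ)) / ((B : ℝ) : ℂ) := by
        push_cast
        ring
      rw [this]
      have h5 : (z ^ 2 + ((b * wn : ℝ) : ℂ) * z
            + (((A0 : ℝ) : ℂ) - ((T : ℝ) : ℂ)) / ((B : ℝ) : ℂ)) * ((B : ℝ) : ℂ)
          = ((A0 : ℝ) : ℂ) - ((T : ℝ) : ℂ) + (z + ((b * wn : ℝ) : ℂ)) * z * ((B : ℝ) : ℂ) := by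
        field_simp
        ring
      rw [Main] at h5
      exact (mul_eq_zero.mp h5).resolve_right hB0
    exact quad_root_re_neg (mul_pos hb hwn) hc hquad
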